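/- Let V = E₀ ⊕ ⋯ ⊕ E_s be a direct-sum decomposition of V into nonzero subspaces with s ≥ 1 and dim E₀ = 1, and let κ = κ(E₀,…,E_s). Then for every x̄ ∈ P(V) ∖ P(V⁰), d(x̄, P(V⁰)) ≥ (2s)^{-1} · κ · ‖g(x̄)‖_∞^{-1}. -/

import Mathlib

open scoped RealInnerProductSpace
open Filter

variable {V : Type*} [NormedAddCommGroup V] [InnerProductSpace ℝ V]

/-- The projective distance between the lines spanned by two nonzero vectors:
`d(x̄, ȳ) = (1 − ⟨x,y⟫²/(|x|²|y|²))^{1/2}`. -/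
noncomputable def projDist (x y : V) : ℝ :=
  Real.sqrt (1 - ⟪x, y⟫ ^ 2 / (‖x‖ ^ 2 * ‖y‖ ^ 2))

/-- The distance `d(x̄, P(W))` from the line spanned by `x` to the projective space of the
submodule `W`. -/
noncomputable def projDistToSub (x : V) (W : Submodule ℝ V) : ℝ :=
  sInf {r : ℝ | ∃ y : V, y ∈ W ∧ y ≠ 0 ∧ r = projDist x y}

/-- `κ(E₀,…,E_s)`: the minimal projective distance between nonzero vectors lying in sums of
disjoint subfamilies of the `E i`. -/
noncomputable def kappa {ι : Type*} (E : ι → Submodule ℝ V) : ℝ :=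
  sInf {r : ℝ | ∃ (I J : Finset ι) (x y : V), I.Nonempty ∧ J.Nonempty ∧ Disjoint I J ∧
    x ∈ (⨆ i ∈ I, E i) ∧ x ≠ 0 ∧ y ∈ (⨆ j ∈ J, E j) ∧ y ≠ 0 ∧ r = projDist x y}

/-- `Vⁱ = E_{i+1} ⊕ ⋯ ⊕ E_s`. -/
noncomputable def Vlow {s : ℕ} (E : Fin (s+1) → Submodule ℝ V) (i : ℕ) : Submodule ℝ V :=
  ⨆ j : Fin (s+1), ⨆ _ : i < (j : ℕ), E j

/-- `Wⁱ = E₀ ⊕ ⋯ ⊕ E_i`. -/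
noncomputable def Whigh {s : ℕ} (E : Fin (s+1) → Submodule ℝ V) (i : ℕ) : Submodule ℝ V :=
  ⨆ j : Fin (s+1), ⨆ _ : (j : ℕ) ≤ i, E j

/-- `‖x ∧ y‖ = (|x|²|y|² − ⟨x,y⟫²)^{1/2}`, the area of the parallelogram spanned by `x, y`. -/
noncomputable def wedgeNorm (x y : V) : ℝ :=
  Real.sqrt (‖x‖ ^ 2 * ‖y‖ ^ 2 - ⟪x, y⟫ ^ 2)

/- ### Auxiliary lemmas -/

lemma aux_cs (x y : V) : ⟪x, y⟫ ^ 2 ≤ ‖x‖ ^ 2 * ‖y‖ ^ 2 := by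
  have h := abs_real_inner_le_norm x y
  nlinarith [abs_nonneg ⟪x, y⟫, sq_abs ⟪x, y⟫, norm_nonneg x, norm_nonneg y]

lemma aux_projDist_le_one (x y : V) (hx : x ≠ 0) (hy : y ≠ 0) : projDist x y ≤ 1 := by
  have hx' : (0:ℝ) < ‖x‖ := norm_pos_iff.mpr hx
  have hy' : (0:ℝ) < ‖y‖ := norm_pos_iff.mpr hy
  have h : 0 ≤ ⟪x, y⟫ ^ 2 / (‖x‖ ^ 2 * ‖y‖ ^ 2) := by positivity
  calc projDist x y = Real.sqrt (1 - ⟪x, y⟫ ^ 2 / (‖x‖ ^ 2 * ‖y‖ ^ 2)) := rfl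
    _ ≤ Real.sqrt 1 := Real.sqrt_le_sqrt (by linarith)
    _ = 1 := Real.sqrt_one

lemma aux_norm_sub_smul_sq (x y : V) (t : ℝ) :
    ‖x - t • y‖ ^ 2 = ‖x‖ ^ 2 - 2 * t * ⟪x, y⟫ + t ^ 2 * ‖y‖ ^ 2 := by
  rw [← real_inner_self_eq_norm_sq, ← real_inner_self_eq_norm_sq, ← real_inner_self_eq_norm_sq]
  simp only [inner_sub_left, inner_sub_right, real_inner_smul_left, real_inner_smul_right,
    real_inner_comm y x]
  ring

lemma aux_wedge_eq (x y : V) (hy : y ≠ 0) :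
    wedgeNorm x y = ‖y‖ * ‖x - (⟪x, y⟫ / ‖y‖ ^ 2) • y‖ := by
  have hy' : ‖y‖ ≠ 0 := norm_ne_zero_iff.mpr hy
  have key : ‖x‖ ^ 2 * ‖y‖ ^ 2 - ⟪x, y⟫ ^ 2 = (‖y‖ * ‖x - (⟪x, y⟫ / ‖y‖ ^ 2) • y‖) ^ 2 := by
    rw [mul_pow, aux_norm_sub_smul_sq]
    field_simp
    ring
  rw [wedgeNorm, key, Real.sqrt_sq (by positivity)]

lemma aux_projDist_eq (x y : V) (hx : x ≠ 0) (hy : y ≠ 0) :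
    projDist x y = wedgeNorm x y / (‖x‖ * ‖y‖) := by
  have hx' : (0:ℝ) < ‖x‖ := norm_pos_iff.mpr hx
  have hy' : (0:ℝ) < ‖y‖ := norm_pos_iff.mpr hy
  rw [projDist, wedgeNorm,
    show 1 - ⟪x, y⟫ ^ 2 / (‖x‖ ^ 2 * ‖y‖ ^ 2)
        = (‖x‖ ^ 2 * ‖y‖ ^ 2 - ⟪x, y⟫ ^ 2) / (‖x‖ ^ 2 * ‖y‖ ^ 2) by field_simp,
    Real.sqrt_div (by have := aux_cs x y; linarith)]
  congr 1
  rw [show ‖x‖ ^ 2 * ‖y‖ ^ 2 = (‖x‖ * ‖y‖) ^ 2 by ring, Real.sqrt_sq (by positivity)]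

lemma aux_projDist_le_norm_add (u w : V) (hu : ‖u‖ = 1) (hw : w ≠ 0) :
    projDist u w ≤ ‖u + w‖ := by
  have hwn : (0:ℝ) < ‖w‖ := norm_pos_iff.mpr hw
  have h2 : ‖u + w‖ ^ 2 = 1 + 2 * ⟪u, w⟫ + ‖w‖ ^ 2 := by rw [norm_add_sq_real, hu]; ring
  have h3 : 0 ≤ ⟪u, w⟫ ^ 2 / ‖w‖ ^ 2 + 2 * ⟪u, w⟫ + ‖w‖ ^ 2 := by
    have : ⟪u, w⟫ ^ 2 / ‖w‖ ^ 2 + 2 * ⟪u, w⟫ + ‖w‖ ^ 2 = (⟪u, w⟫ + ‖w‖ ^ 2) ^ 2 / ‖w‖ ^ 2 := by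
      field_simp; ring
    rw [this]; positivity
  have key : 1 - ⟪u, w⟫ ^ 2 / (‖u‖ ^ 2 * ‖w‖ ^ 2) ≤ ‖u + w‖ ^ 2 := by
    rw [hu, h2]; simp only [one_pow, one_mul]; linarith
  calc projDist u w ≤ Real.sqrt (‖u + w‖ ^ 2) := Real.sqrt_le_sqrt key
    _ = ‖u + w‖ := Real.sqrt_sq (norm_nonneg _)

/-- Lemma 3.8 of the paper. For a splitting `V = E₀ ⊕ ⋯ ⊕ E_s` with
`dim E₀ = 1` and `V⁰ = E₁ ⊕ ⋯ ⊕ E_s`, every `x̄ ∈ P(V) ∖ P(V⁰)` satisfies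
`d(x̄, P(V⁰)) ≥ (2s)⁻¹ · κ · ‖g(x̄)‖_∞⁻¹`. -/
theorem stmt7 [FiniteDimensional ℝ V] (hdim : 2 ≤ Module.finrank ℝ V)
    (s : ℕ) (hs : 1 ≤ s) (E : Fin (s+1) → Submodule ℝ V)
    (hE : DirectSum.IsInternal E) (hEne : ∀ k, E k ≠ ⊥)
    (hE0 : Module.finrank ℝ (E 0) = 1)
    (L : Fin (s+1) → V →ₗ[ℝ] V)
    (hL1 : ∀ x : V, ∑ k, L k x = x) (hL2 : ∀ k x, L k x ∈ E k)
    (u₀ : V) (hu₀ : u₀ ∈ E 0) (hu₀n : ‖u₀‖ = 1)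
    (f₀ : V →ₗ[ℝ] ℝ) (hf₀ : ∀ x, L 0 x = f₀ x • u₀)
    (x : V) (hx : x ≠ 0) (hfx : f₀ x ≠ 0) :
    (2 * (s : ℝ))⁻¹ * kappa E *
        (Finset.univ.sup' Finset.univ_nonempty fun k => ‖(f₀ x)⁻¹ • L k x‖)⁻¹ ≤
      projDistToSub x (Vlow E 0) := by
  classical
  set M := Finset.univ.sup' Finset.univ_nonempty fun k => ‖(f₀ x)⁻¹ • L k x‖ with hMdef
  have hu₀0 : u₀ ≠ 0 := by intro h; rw [h] at hu₀n; simp at hu₀n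
  have hfabs : (0:ℝ) < |f₀ x| := abs_pos.mpr hfx
  have hxnorm : (0:ℝ) < ‖x‖ := norm_pos_iff.mpr hx
  have hs' : (0:ℝ) < (s : ℝ) := by exact_mod_cast hs
  have hs1 : (1:ℝ) ≤ (s : ℝ) := by exact_mod_cast hs
  -- M ≥ 1
  have hM1 : (1:ℝ) ≤ M := by
    have h0 : ‖(f₀ x)⁻¹ • L 0 x‖ = 1 := by
      rw [hf₀, smul_smul, inv_mul_cancel₀ hfx, one_smul, hu₀n]
    calc (1:ℝ) = ‖(f₀ x)⁻¹ • L 0 x‖ := h0.symm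
      _ ≤ M := Finset.le_sup' (fun k => ‖(f₀ x)⁻¹ • L k x‖) (Finset.mem_univ (0 : Fin (s+1)))
  have hMpos : (0:ℝ) < M := lt_of_lt_of_le one_pos hM1
  -- E k ≤ Vlow E 0 for k ≠ 0
  have hEle : ∀ k : Fin (s+1), k ≠ 0 → E k ≤ Vlow E 0 := by
    intro k hk
    have hkpos : 0 < (k : ℕ) := by
      rcases Nat.eq_zero_or_pos (k : ℕ) with h | h
      · exact absurd (Fin.ext h) hk
      · exact h
    exact le_iSup₂ (f := fun (j : Fin (s+1)) (_ : 0 < (j : ℕ)) => E j) k hkpos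
  -- f₀ vanishes on Vlow E 0
  have hindep := hE.submodule_iSupIndep
  have hf₀V : ∀ y ∈ Vlow E 0, f₀ y = 0 := by
    intro y hy
    have hLky : ∀ k : Fin (s+1), k ≠ 0 → L k y ∈ Vlow E 0 :=
      fun k hk => hEle k hk (hL2 k y)
    have hL0y : L 0 y ∈ Vlow E 0 := by
      have heq : L 0 y = y - ∑ k ∈ Finset.univ.erase 0, L k y := by
        rw [Finset.sum_erase_eq_sub (Finset.mem_univ 0), hL1]; abel
      rw [heq]
      exact Submodule.sub_mem _ hy
        (Submodule.sum_mem _ fun k hk => hLky k (Finset.mem_erase.mp hk).1)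
    have hmono : Vlow E 0 ≤ ⨆ j, ⨆ _ : j ≠ (0 : Fin (s+1)), E j := by
      rw [Vlow]
      refine iSup_le fun j => iSup_le fun hj => ?_
      have hne : j ≠ (0 : Fin (s+1)) := by
        intro h; rw [h] at hj; simp at hj
      exact le_iSup₂ (f := fun j (_ : j ≠ (0 : Fin (s+1))) => E j) j hne
    have hzero : L 0 y = 0 :=
      (Submodule.disjoint_def.mp (hindep 0)) (L 0 y) (hL2 0 y) (hmono hL0y)
    have := hzero
    rw [hf₀] at this
    exact (smul_eq_zero.mp this).resolve_right hu₀0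
  -- x - f₀ x • u₀ ∈ Vlow E 0
  have hg : x - f₀ x • u₀ ∈ Vlow E 0 := by
    have heq : x - f₀ x • u₀ = ∑ k ∈ Finset.univ.erase 0, L k x := by
      rw [Finset.sum_erase_eq_sub (Finset.mem_univ 0), hL1, hf₀]
    rw [heq]
    exact Submodule.sum_mem _ fun k hk => hEle k (Finset.mem_erase.mp hk).1 (hL2 k x)
  -- a nonzero vector of E ⟨1,_⟩ inside Vlow E 0
  obtain ⟨y₁, hy₁mem, hy₁⟩ := Submodule.exists_mem_ne_zero_of_ne_bot
    (hEne ⟨1, by omega⟩)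
  have h1ne0 : (⟨1, by omega⟩ : Fin (s+1)) ≠ 0 := by
    intro h; exact absurd (congrArg Fin.val h) (by simp)
  have hy₁V : y₁ ∈ Vlow E 0 := hEle _ h1ne0 hy₁mem
  -- kappa set bdd below
  have hbdd : BddBelow {r : ℝ | ∃ (I J : Finset (Fin (s+1))) (a b : V),
      I.Nonempty ∧ J.Nonempty ∧ Disjoint I J ∧
      a ∈ (⨆ i ∈ I, E i) ∧ a ≠ 0 ∧ b ∈ (⨆ j ∈ J, E j) ∧ b ≠ 0 ∧ r = projDist a b} := by
    refine ⟨0, ?_⟩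
    rintro r ⟨I, J, a, b, -, -, -, -, -, -, -, rfl⟩
    exact Real.sqrt_nonneg _
  have hkappa0 : 0 ≤ kappa E :=
    Real.sInf_nonneg (by rintro r ⟨I, J, a, b, -, -, -, -, -, -, -, rfl⟩; exact Real.sqrt_nonneg _)
  -- kappa ≤ projDist u₀ w for nonzero w ∈ Vlow E 0
  have hJle : Vlow E 0 ≤
      ⨆ j ∈ (Finset.univ.filter (fun j : Fin (s+1) => 0 < (j : ℕ))), E j := by
    rw [Vlow]
    refine iSup_le fun j => iSup_le fun hj => ?_
    exact le_iSup₂ (f := fun j _ => E j) j (Finset.mem_filter.mpr ⟨Finset.mem_univ _, hj⟩)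
  have hkle : ∀ w ∈ Vlow E 0, w ≠ 0 → kappa E ≤ projDist u₀ w := by
    intro w hw hw0
    refine csInf_le hbdd ?_
    refine ⟨{0}, Finset.univ.filter (fun j : Fin (s+1) => 0 < (j : ℕ)), u₀, w,
      Finset.singleton_nonempty _,
      ⟨⟨1, by omega⟩, Finset.mem_filter.mpr ⟨Finset.mem_univ _, by simp⟩⟩, ?_,
      le_iSup₂ (f := fun i (_ : i ∈ ({0} : Finset (Fin (s+1)))) => E i) (0 : Fin (s+1))
        (Finset.mem_singleton_self (0 : Fin (s+1))) hu₀,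
      hu₀0, hJle hw, hw0, rfl⟩
    · rw [Finset.disjoint_left]
      intro a ha hb
      rw [Finset.mem_singleton] at ha
      rw [ha, Finset.mem_filter] at hb
      simp at hb
  -- kappa ≤ 1
  have hk1 : kappa E ≤ 1 :=
    le_trans (hkle y₁ hy₁V hy₁) (aux_projDist_le_one _ _ hu₀0 hy₁)
  -- main claim: ‖u₀ + w‖ ≥ kappa for w ∈ Vlow E 0
  have hclaim : ∀ w ∈ Vlow E 0, kappa E ≤ ‖u₀ + w‖ := by
    intro w hw
    by_cases hw0 : w = 0
    · rw [hw0, add_zero, hu₀n]; exact hk1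
    · exact le_trans (hkle w hw hw0) (aux_projDist_le_norm_add u₀ w hu₀n hw0)
  -- ‖x‖ ≤ 2 s |f₀ x| M
  have hxle : ‖x‖ ≤ 2 * s * (|f₀ x| * M) := by
    calc ‖x‖ = ‖∑ k, L k x‖ := by rw [hL1]
      _ ≤ ∑ k, ‖L k x‖ := norm_sum_le _ _
      _ = ∑ k, |f₀ x| * ‖(f₀ x)⁻¹ • L k x‖ := by
          refine Finset.sum_congr rfl fun k _ => ?_
          rw [norm_smul, norm_inv, Real.norm_eq_abs, ← mul_assoc,
            mul_inv_cancel₀ (abs_ne_zero.mpr hfx), one_mul]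
      _ ≤ ∑ _k : Fin (s+1), |f₀ x| * M :=
          Finset.sum_le_sum fun k _ =>
            mul_le_mul_of_nonneg_left
              (Finset.le_sup' (fun k => ‖(f₀ x)⁻¹ • L k x‖) (Finset.mem_univ k)) (abs_nonneg _)
      _ = ((s : ℝ) + 1) * (|f₀ x| * M) := by
          rw [Finset.sum_const, Finset.card_univ, Fintype.card_fin]
          push_cast; ring
      _ ≤ 2 * s * (|f₀ x| * M) := by
          have h1 : (s : ℝ) + 1 ≤ 2 * s := by linarith [hs1]
          exact mul_le_mul_of_nonneg_right h1 (by positivity)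
  -- now bound the infimum
  refine le_csInf ⟨projDist x y₁, y₁, hy₁V, hy₁, rfl⟩ ?_
  rintro r ⟨y, hyV, hy0, rfl⟩
  have hyn : (0:ℝ) < ‖y‖ := norm_pos_iff.mpr hy0
  set t : ℝ := ⟪x, y⟫ / ‖y‖ ^ 2 with ht
  set z : V := x - t • y with hz
  -- z = f₀ x • (u₀ + w)
  set w : V := (f₀ x)⁻¹ • ((x - f₀ x • u₀) - t • y) with hwdef
  have hwV : w ∈ Vlow E 0 :=
    Submodule.smul_mem _ _ (Submodule.sub_mem _ hg (Submodule.smul_mem _ _ hyV))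
  have hzeq : z = f₀ x • (u₀ + w) := by
    rw [hwdef, smul_add, smul_smul, mul_inv_cancel₀ hfx, one_smul, hz]
    abel
  have hznorm : |f₀ x| * kappa E ≤ ‖z‖ := by
    rw [hzeq, norm_smul, Real.norm_eq_abs]
    exact mul_le_mul_of_nonneg_left (hclaim w hwV) (abs_nonneg _)
  have hpd : projDist x y = ‖z‖ / ‖x‖ := by
    rw [aux_projDist_eq x y hx hy0, aux_wedge_eq x y hy0, ← ht, ← hz]
    rw [mul_comm ‖x‖ ‖y‖, mul_div_mul_left _ _ (ne_of_gt hyn)]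
  rw [hpd]
  have heq : (2 * (s : ℝ))⁻¹ * kappa E * M⁻¹ = (|f₀ x| * kappa E) / (2 * s * (|f₀ x| * M)) := by
    field_simp
  rw [heq]
  exact div_le_div₀ (norm_nonneg _) hznorm hxnorm hxle
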